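/- Let X_1, …, X_m and Y_1, …, Y_m be random variables taking values in [0,1] such that the X_k are i.i.d. with mean μ*, the Y_k are i.i.d. with mean μ′, the whole family is independent, and Δ = μ* − μ′ satisfies Δ ≥ d > 0. Define the recommended arm to be the suboptimal one exactly when (1/m)∑Y_k ≥ (1/m)∑X_k, and define the simple regret to be Δ if the suboptimal arm is recommended and 0 otherwise. Then the expected simple regret is Δ·P( (1/m)∑Y_k ≥ (1/m)∑X_k ) ≤ Δ·exp(−d² m); in particular, the expected simple regret decreases exponentially in the number of samples m. -/

import Mathlib

open Real

open MeasureTheory ProbabilityTheory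

section AuxHoeffding

lemma hoeffding_poly (p t : ℝ) (hp0 : 0 ≤ p) (hp1 : p ≤ 1) :
    1 - p + p * exp t ≤ exp (p * t + t ^ 2 / 8) := by
  set q : ℝ → ℝ := fun s => 1 - p + p * exp s with hq
  have hqpos : ∀ s, 0 < q s := by
    intro s
    have := exp_pos s
    rcases eq_or_lt_of_le hp0 with h | h
    · simp [hq, ← h]
    · have : 0 < p * exp s := mul_pos h (exp_pos s)
      simp only [hq]; nlinarith
  set g : ℝ → ℝ := fun s => p + s / 4 - p * exp s / q s with hgdef
  set f : ℝ → ℝ := fun s => p * s + s ^ 2 / 8 - Real.log (q s) with hfdef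
  have hqd : ∀ s, HasDerivAt q (p * exp s) s := by
    intro s
    exact ((hasDerivAt_exp s).const_mul p).const_add (1 - p)
  have hfd : ∀ s, HasDerivAt f (g s) s := by
    intro s
    have h1 : HasDerivAt (fun s => p * s + s ^ 2 / 8) (p + s / 4) s := by
      have := ((hasDerivAt_pow 2 s).div_const 8).const_add (0 : ℝ)
      have h2 : HasDerivAt (fun s : ℝ => s ^ 2 / 8) (s / 4) s := by
        simpa using (hasDerivAt_pow 2 s).div_const 8 |>.congr_deriv (by ring)
      exact ((hasDerivAt_id s |>.const_mul p).add h2).congr_deriv (by ring)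
    have h3 : HasDerivAt (fun s => Real.log (q s)) (p * exp s / q s) s :=
      (hqd s).log (hqpos s).ne'
    exact h1.sub h3
  have hgd : ∀ s, HasDerivAt g (1 / 4 - p * exp s * (1 - p) / (q s) ^ 2) s := by
    intro s
    have hnum : HasDerivAt (fun s => p * exp s) (p * exp s) s := (hasDerivAt_exp s).const_mul p
    have hdiv : HasDerivAt (fun s => p * exp s / q s)
        ((p * exp s * q s - p * exp s * (p * exp s)) / (q s) ^ 2) s :=
      hnum.div (hqd s) (hqpos s).ne'
    have h4 : HasDerivAt (fun s => p + s / 4) (1 / 4) s := by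
      simpa using (hasDerivAt_id s |>.div_const 4).const_add p
    have := h4.sub hdiv
    refine this.congr_deriv ?_
    have : (p * exp s * q s - p * exp s * (p * exp s)) = p * exp s * (1 - p) := by
      simp only [hq]; ring
    rw [this]
  have hgderiv_nonneg : ∀ s, 0 ≤ 1 / 4 - p * exp s * (1 - p) / (q s) ^ 2 := by
    intro s
    rw [sub_nonneg, div_le_iff₀ (pow_pos (hqpos s) 2)]
    have hsq : (0:ℝ) ≤ (p * exp s - (1 - p)) ^ 2 := sq_nonneg _
    have hqe : q s = 1 - p + p * exp s := rfl
    rw [hqe]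
    nlinarith [hsq]
  have hgmono : Monotone g := monotone_of_deriv_nonneg
    (fun s => (hgd s).differentiableAt)
    (fun s => by rw [(hgd s).deriv]; exact hgderiv_nonneg s)
  have hg0 : g 0 = 0 := by simp [hgdef, hq]
  have hf0 : f 0 = 0 := by simp [hfdef, hq]
  have hfnonneg : 0 ≤ f t := by
    rcases le_total 0 t with ht | ht
    · have : MonotoneOn f (Set.Ici 0) := by
        apply monotoneOn_of_deriv_nonneg (convex_Ici 0)
          (fun s _ => ((hfd s).differentiableAt).continuousAt.continuousWithinAt)
          (fun s _ => ((hfd s).differentiableAt).differentiableWithinAt)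
        intro s hs
        rw [(hfd s).deriv]
        rw [interior_Ici] at hs
        calc (0:ℝ) = g 0 := hg0.symm
          _ ≤ g s := hgmono (le_of_lt hs)
      have := this (Set.self_mem_Ici) (Set.mem_Ici.2 ht) ht
      rwa [hf0] at this
    · have : AntitoneOn f (Set.Iic 0) := by
        apply antitoneOn_of_deriv_nonpos (convex_Iic 0)
          (fun s _ => ((hfd s).differentiableAt).continuousAt.continuousWithinAt)
          (fun s _ => ((hfd s).differentiableAt).differentiableWithinAt)
        intro s hs
        rw [(hfd s).deriv]
        rw [interior_Iic] at hs
        calc g s ≤ g 0 := hgmono (le_of_lt hs)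
          _ = 0 := hg0
      have := this (Set.mem_Iic.2 ht) (Set.self_mem_Iic) ht
      rwa [hf0] at this
  have hlog : Real.log (q t) ≤ p * t + t ^ 2 / 8 := by
    simp only [hfdef] at hfnonneg; linarith
  calc 1 - p + p * exp t = q t := rfl
    _ = exp (Real.log (q t)) := (exp_log (hqpos t)).symm
    _ ≤ exp (p * t + t ^ 2 / 8) := exp_le_exp.2 hlog

open MeasureTheory ProbabilityTheory in
lemma mgf_le_of_Icc {Ω : Type*} [MeasurableSpace Ω] (μ : Measure Ω) [IsProbabilityMeasure μ]
    {W : Ω → ℝ} (hmeas : Measurable W) (hrange : ∀ᵐ ω ∂μ, W ω ∈ Set.Icc (0 : ℝ) 1) (t : ℝ) :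
    mgf W μ t ≤ Real.exp ((∫ ω, W ω ∂μ) * t + t ^ 2 / 8) := by
  have hintW : Integrable W μ := by
    refine (integrable_const (1 : ℝ)).mono' hmeas.aestronglyMeasurable ?_
    filter_upwards [hrange] with ω h
    rw [Real.norm_eq_abs, abs_le]; exact ⟨by linarith [h.1], by linarith [h.2]⟩
  set p : ℝ := ∫ ω, W ω ∂μ with hpdef
  have hp0 : 0 ≤ p := integral_nonneg_of_ae (hrange.mono fun ω h => h.1)
  have hp1 : p ≤ 1 := by
    have := integral_mono_ae hintW (integrable_const (1 : ℝ)) (hrange.mono fun ω h => h.2)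
    simpa using this
  have hptwise : ∀ᵐ ω ∂μ, exp (t * W ω) ≤ 1 - W ω + W ω * exp t := by
    filter_upwards [hrange] with ω h
    have hc := convexOn_exp.2 (Set.mem_univ (0 : ℝ)) (Set.mem_univ t)
      (by linarith [h.2] : (0:ℝ) ≤ 1 - W ω) h.1 (by ring)
    simpa [mul_comm] using hc
  have hintE : Integrable (fun ω => exp (t * W ω)) μ := by
    refine (integrable_const (exp |t|)).mono'
      ((hmeas.const_mul t).exp).aestronglyMeasurable ?_
    filter_upwards [hrange] with ω h
    rw [Real.norm_eq_abs, abs_of_pos (exp_pos _), exp_le_exp]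
    calc t * W ω ≤ |t * W ω| := le_abs_self _
      _ = |t| * |W ω| := abs_mul _ _
      _ ≤ |t| * 1 := by
          have : |W ω| ≤ 1 := abs_le.2 ⟨by linarith [h.1], h.2⟩
          nlinarith [abs_nonneg t]
      _ = |t| := mul_one _
  have hintR : Integrable (fun ω => 1 - W ω + W ω * exp t) μ :=
    ((integrable_const (1:ℝ)).sub hintW).add (hintW.mul_const _)
  calc mgf W μ t = ∫ ω, exp (t * W ω) ∂μ := rfl
    _ ≤ ∫ ω, (1 - W ω + W ω * exp t) ∂μ := integral_mono_ae hintE hintR hptwise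
    _ = 1 - p + p * exp t := by
        have h1 : Integrable (fun ω => 1 - W ω) μ := (integrable_const (1:ℝ)).sub hintW
        rw [integral_add h1 (hintW.mul_const _), integral_sub (integrable_const (1:ℝ)) hintW,
          MeasureTheory.integral_mul_const, integral_const]
        simp [hpdef]
    _ ≤ exp (p * t + t ^ 2 / 8) := hoeffding_poly p t hp0 hp1


end AuxHoeffding

/-- Two-arm simple regret: `X 1, …, X m` are the i.i.d. rewards of an optimal arm (mean
`μ*`), `Y 1, …, Y m` the i.i.d. rewards of a suboptimal arm (mean `μ'`), all in `[0,1]`,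
with the whole family independent and `Δ = μ* - μ' ≥ d > 0`. The suboptimal arm is
recommended exactly when its empirical mean is at least that of the optimal arm, and the
simple regret is `Δ` in that case and `0` otherwise. Then the expected simple regret
equals `Δ · P(empirical mean of Y ≥ empirical mean of X)` and is at most
`Δ · exp (-d² m)`. -/
theorem expected_simple_regret_two_arms
    {Ω : Type*} [MeasurableSpace Ω] (μ : Measure Ω) [IsProbabilityMeasure μ]
    (m : ℕ) (hm : 0 < m)
    (X Y : Fin m → Ω → ℝ)
    (μstar μ' d : ℝ) (hd : 0 < d)
    (hmeasX : ∀ k, Measurable (X k)) (hmeasY : ∀ k, Measurable (Y k))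
    (hXrange : ∀ k, ∀ᵐ ω ∂μ, X k ω ∈ Set.Icc (0 : ℝ) 1)
    (hYrange : ∀ k, ∀ᵐ ω ∂μ, Y k ω ∈ Set.Icc (0 : ℝ) 1)
    (hXident : ∀ k k', IdentDistrib (X k) (X k') μ μ)
    (hYident : ∀ k k', IdentDistrib (Y k) (Y k') μ μ)
    (hXmean : ∀ k, ∫ ω, X k ω ∂μ = μstar)
    (hYmean : ∀ k, ∫ ω, Y k ω ∂μ = μ')
    (hindep : iIndepFun (Sum.elim X Y) μ)
    (hgap : d ≤ μstar - μ') :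
    (∫ ω, (if (1 / m : ℝ) * ∑ k, X k ω ≤ (1 / m : ℝ) * ∑ k, Y k ω
            then μstar - μ' else 0) ∂μ)
        = (μstar - μ') *
            (μ {ω | (1 / m : ℝ) * ∑ k, X k ω ≤ (1 / m : ℝ) * ∑ k, Y k ω}).toReal ∧
    (∫ ω, (if (1 / m : ℝ) * ∑ k, X k ω ≤ (1 / m : ℝ) * ∑ k, Y k ω
            then μstar - μ' else 0) ∂μ)
        ≤ (μstar - μ') * Real.exp (-d ^ 2 * m) := by
  set Δ : ℝ := μstar - μ' with hΔdef
  have hΔpos : 0 < Δ := lt_of_lt_of_le hd hgap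
  set A : Set Ω := {ω | (1 / m : ℝ) * ∑ k, X k ω ≤ (1 / m : ℝ) * ∑ k, Y k ω} with hAdef
  have hAmeas : MeasurableSet A := by
    apply measurableSet_le
    · exact (Finset.measurable_sum Finset.univ fun k _ => hmeasX k).const_mul _
    · exact (Finset.measurable_sum Finset.univ fun k _ => hmeasY k).const_mul _
  -- first conjunct
  have heq : (∫ ω, (if (1 / m : ℝ) * ∑ k, X k ω ≤ (1 / m : ℝ) * ∑ k, Y k ω
      then Δ else 0) ∂μ) = Δ * (μ A).toReal := by
    have h1 : ∀ ω, (if (1 / m : ℝ) * ∑ k, X k ω ≤ (1 / m : ℝ) * ∑ k, Y k ω then Δ else 0)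
        = A.indicator (fun _ => Δ) ω := by
      intro ω
      by_cases h : (1 / m : ℝ) * ∑ k, X k ω ≤ (1 / m : ℝ) * ∑ k, Y k ω <;>
        simp [hAdef, Set.indicator_apply, h]
    rw [integral_congr_ae (Filter.Eventually.of_forall h1), integral_indicator_const _ hAmeas,
      smul_eq_mul, mul_comm]
    rfl
  -- the 2m auxiliary variables
  set W : Fin m ⊕ Fin m → Ω → ℝ := Sum.elim (fun k ω => 1 - X k ω) Y with hWdef
  have hWmeas : ∀ i, Measurable (W i) := by
    rintro (k | k)
    · exact measurable_const.sub (hmeasX k)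
    · exact hmeasY k
  have hWrange : ∀ i, ∀ᵐ ω ∂μ, W i ω ∈ Set.Icc (0 : ℝ) 1 := by
    rintro (k | k)
    · filter_upwards [hXrange k] with ω h
      exact ⟨by simpa [hWdef] using h.2, by simpa [hWdef] using h.1⟩
    · exact hYrange k
  have hWindep : iIndepFun W μ := by
    have hg : ∀ i : Fin m ⊕ Fin m,
        Measurable (Sum.elim (fun _ : Fin m => fun x : ℝ => 1 - x)
          (fun _ : Fin m => (id : ℝ → ℝ)) i) := by
      rintro (k | k)
      · exact measurable_const.sub measurable_id
      · exact measurable_id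
    have h := hindep.comp _ hg
    convert h using 1
    funext i; rcases i with k | k <;> rfl
  -- integrability of X and of exp(t * W i)
  have hXint : ∀ k, Integrable (X k) μ := by
    intro k
    refine (integrable_const (1 : ℝ)).mono' (hmeasX k).aestronglyMeasurable ?_
    filter_upwards [hXrange k] with ω h
    rw [Real.norm_eq_abs, abs_le]; exact ⟨by linarith [h.1], by linarith [h.2]⟩
  have hWexp_int : ∀ (t : ℝ) (i), Integrable (fun ω => exp (t * W i ω)) μ := by
    intro t i
    refine (integrable_const (exp |t|)).mono'
      (((hWmeas i).const_mul t).exp).aestronglyMeasurable ?_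
    filter_upwards [hWrange i] with ω h
    rw [Real.norm_eq_abs, abs_of_pos (exp_pos _), exp_le_exp]
    calc t * W i ω ≤ |t * W i ω| := le_abs_self _
      _ = |t| * |W i ω| := abs_mul _ _
      _ ≤ |t| * 1 := by
          have : |W i ω| ≤ 1 := abs_le.2 ⟨by linarith [h.1], h.2⟩
          nlinarith [abs_nonneg t]
      _ = |t| := mul_one _
  -- means of the W i
  have hWmean : ∀ i, ∫ ω, W i ω ∂μ = Sum.elim (fun _ : Fin m => 1 - μstar)
      (fun _ : Fin m => μ') i := by
    rintro (k | k)
    · have : (∫ ω, (1 - X k ω) ∂μ) = 1 - μstar := by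
        rw [integral_sub (integrable_const (1:ℝ)) (hXint k), integral_const, hXmean k]
        simp
      simpa [hWdef] using this
    · simpa [hWdef] using hYmean k
  -- event rewriting
  have hmR : (0:ℝ) < (m:ℝ) := by exact_mod_cast hm
  have hA' : A = {ω | (m : ℝ) ≤ (∑ i, W i) ω} := by
    ext ω
    simp only [hAdef, Set.mem_setOf_eq, Finset.sum_apply]
    have hsum : ∑ i, W i ω = (m : ℝ) - ∑ k, X k ω + ∑ k, Y k ω := by
      rw [Fintype.sum_sum_type]
      have h1 : ∑ k : Fin m, W (Sum.inl k) ω = (m : ℝ) - ∑ k, X k ω := by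
        simp [hWdef, Finset.sum_sub_distrib]
      have h2 : ∑ k : Fin m, W (Sum.inr k) ω = ∑ k, Y k ω := rfl
      rw [h1, h2]
    rw [hsum]
    constructor
    · intro h
      have := (mul_le_mul_iff_right₀ (by positivity : (0:ℝ) < 1 / m)).1 h
      linarith
    · intro h
      have h2 : ∑ k, X k ω ≤ ∑ k, Y k ω := by linarith
      exact (mul_le_mul_iff_right₀ (by positivity : (0:ℝ) < 1 / m)).2 h2
  -- Chernoff
  set t : ℝ := 2 * Δ with htdef
  have ht : 0 ≤ t := by positivity
  have hSint : Integrable (fun ω => exp (t * (∑ i, W i) ω)) μ :=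
    hWindep.integrable_exp_mul_sum hWmeas (fun i _ => hWexp_int t i)
  have hcher : (μ A).toReal ≤ exp (-t * m) * mgf (∑ i, W i) μ t := by
    rw [hA']
    exact measure_ge_le_exp_mul_mgf (m : ℝ) ht hSint
  have hmgf : mgf (∑ i, W i) μ t ≤
      exp ((m : ℝ) * ((1 - μstar) * t + t ^ 2 / 8) + (m : ℝ) * (μ' * t + t ^ 2 / 8)) := by
    rw [show (∑ i, W i) = ∑ i ∈ Finset.univ, W i from rfl, hWindep.mgf_sum hWmeas]
    calc ∏ i, mgf (W i) μ t
        ≤ ∏ i, exp ((Sum.elim (fun _ : Fin m => 1 - μstar) (fun _ : Fin m => μ') i) * t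
            + t ^ 2 / 8) := by
          apply Finset.prod_le_prod (fun i _ => mgf_nonneg)
          intro i _
          have := mgf_le_of_Icc μ (hWmeas i) (hWrange i) t
          rwa [hWmean i] at this
      _ = exp (∑ i, ((Sum.elim (fun _ : Fin m => 1 - μstar) (fun _ : Fin m => μ') i) * t
            + t ^ 2 / 8)) := (Real.exp_sum _ _).symm
      _ = exp ((m : ℝ) * ((1 - μstar) * t + t ^ 2 / 8) + (m : ℝ) * (μ' * t + t ^ 2 / 8)) := by
          congr 1
          rw [Fintype.sum_sum_type]
          simp only [Sum.elim_inl, Sum.elim_inr, Finset.sum_const, Finset.card_univ,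
            Fintype.card_fin, nsmul_eq_mul]
          try ring
  have hP : (μ A).toReal ≤ exp (-(Δ ^ 2) * m) := by
    calc (μ A).toReal ≤ exp (-t * m) * mgf (∑ i, W i) μ t := hcher
      _ ≤ exp (-t * m) * exp ((m : ℝ) * ((1 - μstar) * t + t ^ 2 / 8)
            + (m : ℝ) * (μ' * t + t ^ 2 / 8)) := by
          exact mul_le_mul_of_nonneg_left hmgf (exp_pos _).le
      _ = exp (-t * m + ((m : ℝ) * ((1 - μstar) * t + t ^ 2 / 8)
            + (m : ℝ) * (μ' * t + t ^ 2 / 8))) := (Real.exp_add _ _).symm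
      _ = exp (-(Δ ^ 2) * m) := by
          congr 1
          have : μ' = μstar - Δ := by rw [hΔdef]; ring
          rw [this, htdef]; ring
  have hPd : (μ A).toReal ≤ exp (-d ^ 2 * m) := by
    refine hP.trans (exp_le_exp.2 ?_)
    have : d ^ 2 ≤ Δ ^ 2 := by nlinarith
    nlinarith [hmR]
  refine ⟨heq, ?_⟩
  rw [heq]
  exact mul_le_mul_of_nonneg_left hPd hΔpos.le
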